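/- Let R be a discrete valuation ring with valuation ν: K^* → ℤ, residue characteristic p, and let a_1,...,a_n be positive integers such that p ∤ a_j for j < n, p ∤ (a_1+...+a_n), and p does not divide ∑_{j∈S} a_j for any nonempty S ⊆ {1,...,n-1}. Suppose x_1,...,x_n ∈ R satisfy x_n = 1, ν(x_j) > 0 for j < n, the x_j pairwise distinct, and for each i, a_i ∏_{j≠i}(x_j - x_i) = (a_1+...+a_n)∏_{j≠i} x_j in K. Then (n-1)·ν(x_j) = ν(a_n) for all j < n, and ν(x_j - x_k) = ν(x_j) for all distinct j, k < n. -/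

import Mathlib

open Finset IsLocalRing

section AuxLemmas

open Polynomial

private lemma isUnit_finset_prod {R : Type*} [CommMonoid R] {ι : Type*} (s : Finset ι)
    (f : ι → R) (h : ∀ i ∈ s, IsUnit (f i)) : IsUnit (∏ i ∈ s, f i) :=
  Finset.prod_induction f IsUnit (fun _ _ => IsUnit.mul) isUnit_one h

private lemma auxKey {R : Type*} [CommRing R] [IsDomain R] {ι : Type*} [Fintype ι]
    [DecidableEq ι] (N : ℕ) (hcard : Fintype.card ι = N + 1)
    (x : ι → R) (hx : Function.Injective x) (b : ι → R)
    (hb : ∀ t, b t * ∏ j ∈ univ.erase t, (x j - x t) =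
      (∑ i, b i) * ∏ j ∈ univ.erase t, x j) :
    ∑ i, Polynomial.C (b i * x i) * ∏ j ∈ univ.erase i, (Polynomial.X - Polynomial.C (x j))
      = Polynomial.C ((-1 : R)^N * (∑ i, b i) * ∏ j, x j) := by
  classical
  have hcarderase : ∀ t : ι, (univ.erase t).card = N := by
    intro t
    rw [Finset.card_erase_of_mem (Finset.mem_univ _), Finset.card_univ, hcard]
    rfl
  set Q : Polynomial R :=
    (∑ i, Polynomial.C (b i * x i) * ∏ j ∈ univ.erase i, (Polynomial.X - Polynomial.C (x j)))
      - Polynomial.C ((-1 : R)^N * (∑ i, b i) * ∏ j, x j) with hQ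
  have hev : ∀ t, Q.eval (x t) = 0 := by
    intro t
    rw [hQ, Polynomial.eval_sub, Polynomial.eval_C, Polynomial.eval_finset_sum]
    rw [Finset.sum_eq_single t]
    · rw [Polynomial.eval_mul, Polynomial.eval_C, Polynomial.eval_prod]
      simp only [Polynomial.eval_sub, Polynomial.eval_X, Polynomial.eval_C]
      have hneg : ∏ j ∈ univ.erase t, (x t - x j)
          = (-1 : R)^N * ∏ j ∈ univ.erase t, (x j - x t) := by
        calc ∏ j ∈ univ.erase t, (x t - x j)
            = ∏ j ∈ univ.erase t, (-1 * (x j - x t)) := by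
              refine Finset.prod_congr rfl fun j _ => by ring
          _ = (-1 : R)^((univ.erase t).card) * ∏ j ∈ univ.erase t, (x j - x t) := by
              rw [Finset.prod_mul_distrib, Finset.prod_const]
          _ = _ := by rw [hcarderase]
      rw [hneg]
      have h := hb t
      have hx_t : x t * ∏ j ∈ univ.erase t, x j = ∏ j, x j :=
        Finset.mul_prod_erase univ x (Finset.mem_univ t)
      linear_combination ((-1 : R)^N * x t) * h + ((-1 : R)^N * (∑ i, b i)) * hx_t
    · intro i _ hit
      rw [Polynomial.eval_mul, Polynomial.eval_prod]
      rw [Finset.prod_eq_zero (Finset.mem_erase.mpr ⟨hit.symm, Finset.mem_univ t⟩)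
        (by simp)]
      exact mul_zero _
    · intro h; exact absurd (Finset.mem_univ t) h
  have hdeg : Q.natDegree < Fintype.card ι := by
    rw [hcard]
    have h1 : Q.natDegree ≤ N := by
      rw [hQ]
      refine le_trans (Polynomial.natDegree_sub_le _ _) ?_
      rw [max_le_iff]
      constructor
      · apply Polynomial.natDegree_sum_le_of_forall_le
        intro i _
        refine le_trans (Polynomial.natDegree_C_mul_le _ _) ?_
        refine le_trans (Polynomial.natDegree_prod_le _ _) ?_
        calc ∑ j ∈ univ.erase i, (Polynomial.X - Polynomial.C (x j)).natDegree
            = ∑ j ∈ univ.erase i, 1 :=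
              Finset.sum_congr rfl fun j _ => Polynomial.natDegree_X_sub_C _
          _ = (univ.erase i).card := by rw [Finset.sum_const, smul_eq_mul, mul_one]
          _ ≤ N := le_of_eq (hcarderase i)
      · exact le_trans (le_of_eq (Polynomial.natDegree_C _)) (Nat.zero_le _)
    omega
  have hQ0 := Polynomial.eq_zero_of_natDegree_lt_card_of_eval_eq_zero Q hx hev hdeg
  rw [hQ] at hQ0
  exact sub_eq_zero.mp hQ0

private lemma auxB {k : Type*} [Field k] {ι : Type*} [DecidableEq ι] [DecidableEq k]
    (I : Finset ι) (ω bb : ι → k) (bL cst c : k)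
    (hT2 : 1 < (I.filter fun j => ω j = c).card)
    (hE : Polynomial.C bL * ∏ j ∈ I, (Polynomial.X - Polynomial.C (ω j)) =
      (∑ i ∈ I, Polynomial.C (bb i * ω i) *
        ∏ j ∈ I.erase i, (Polynomial.X - Polynomial.C (ω j))) + Polynomial.C cst) :
    cst = 0 := by
  classical
  obtain ⟨j1, hj1⟩ := Finset.card_pos.mp (zero_lt_one.trans hT2)
  have hj1I : j1 ∈ I := (Finset.mem_filter.mp hj1).1
  have hωj1 : ω j1 = c := (Finset.mem_filter.mp hj1).2
  have h := congrArg (Polynomial.eval c) hE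
  have hGz : Polynomial.eval c (∏ j ∈ I, (Polynomial.X - Polynomial.C (ω j))) = 0 := by
    rw [Polynomial.eval_prod]
    exact Finset.prod_eq_zero hj1I (by simp [hωj1])
  have hsz : ∑ i ∈ I, Polynomial.eval c (Polynomial.C (bb i * ω i) *
      ∏ j ∈ I.erase i, (Polynomial.X - Polynomial.C (ω j))) = 0 := by
    refine Finset.sum_eq_zero fun i hi => ?_
    obtain ⟨j2, hj2T, hj2ne⟩ := Finset.exists_mem_ne hT2 i
    rw [Polynomial.eval_mul, Polynomial.eval_prod,
      Finset.prod_eq_zero (Finset.mem_erase.mpr ⟨hj2ne, (Finset.mem_filter.mp hj2T).1⟩)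
        (by simp [(Finset.mem_filter.mp hj2T).2]), mul_zero]
  rw [Polynomial.eval_mul, hGz, mul_zero, Polynomial.eval_add, Polynomial.eval_finset_sum,
    hsz, Polynomial.eval_C, zero_add] at h
  exact h.symm

private lemma auxA {k : Type*} [Field k] {ι : Type*} [DecidableEq ι] [DecidableEq k]
    (I : Finset ι) (ω bb : ι → k) (bL c : k)
    (hT : (I.filter fun j => ω j = c).Nonempty)
    (hE : Polynomial.C bL * ∏ j ∈ I, (Polynomial.X - Polynomial.C (ω j)) =
      ∑ i ∈ I, Polynomial.C (bb i * ω i) *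
        ∏ j ∈ I.erase i, (Polynomial.X - Polynomial.C (ω j))) :
    c * ∑ i ∈ I.filter (fun j => ω j = c), bb i = 0 := by
  classical
  set T := I.filter (fun j => ω j = c) with hT'
  set Tc := I.filter (fun j => ¬ ω j = c) with hTc'
  obtain ⟨t', ht'⟩ : ∃ t', T.card = t' + 1 :=
    ⟨T.card - 1, (Nat.succ_pred_eq_of_pos (Finset.card_pos.mpr hT)).symm⟩
  set r : Polynomial k := ∏ j ∈ Tc, (Polynomial.X - Polynomial.C (ω j)) with hr
  have hωT : ∀ j ∈ T, ω j = c := fun j hj => (Finset.mem_filter.mp hj).2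
  have hG : ∏ j ∈ I, (Polynomial.X - Polynomial.C (ω j))
      = (Polynomial.X - Polynomial.C c)^(t'+1) * r := by
    rw [← Finset.prod_filter_mul_prod_filter_not I (fun j => ω j = c)]
    congr 1
    calc ∏ j ∈ T, (Polynomial.X - Polynomial.C (ω j))
        = ∏ _j ∈ T, (Polynomial.X - Polynomial.C c) :=
          Finset.prod_congr rfl (fun j hj => by rw [hωT j hj])
      _ = _ := by rw [Finset.prod_const, ht']
  have hgT : ∀ i ∈ T, ∏ j ∈ I.erase i, (Polynomial.X - Polynomial.C (ω j))
      = (Polynomial.X - Polynomial.C c)^t' * r := by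
    intro i hi
    rw [← Finset.prod_filter_mul_prod_filter_not (I.erase i) (fun j => ω j = c)]
    have e1 : (I.erase i).filter (fun j => ω j = c) = T.erase i := by
      rw [Finset.filter_erase]
    have e2 : (I.erase i).filter (fun j => ¬ ω j = c) = Tc := by
      rw [Finset.filter_erase]
      exact Finset.erase_eq_of_notMem
        (fun hmem => (Finset.mem_filter.mp hmem).2 (hωT i hi))
    rw [e1, e2]
    congr 1
    calc ∏ j ∈ T.erase i, (Polynomial.X - Polynomial.C (ω j))
        = ∏ _j ∈ T.erase i, (Polynomial.X - Polynomial.C c) :=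
          Finset.prod_congr rfl (fun j hj => by rw [hωT j (Finset.mem_of_mem_erase hj)])
      _ = _ := by rw [Finset.prod_const, Finset.card_erase_of_mem hi, ht', Nat.add_sub_cancel]
  have hgTc : ∀ i ∈ Tc, ∏ j ∈ I.erase i, (Polynomial.X - Polynomial.C (ω j))
      = (Polynomial.X - Polynomial.C c)^(t'+1) *
        ∏ j ∈ Tc.erase i, (Polynomial.X - Polynomial.C (ω j)) := by
    intro i hi
    rw [← Finset.prod_filter_mul_prod_filter_not (I.erase i) (fun j => ω j = c)]
    have e1 : (I.erase i).filter (fun j => ω j = c) = T := by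
      rw [Finset.filter_erase]
      exact Finset.erase_eq_of_notMem
        (fun hmem => (Finset.mem_filter.mp hi).2 ((Finset.mem_filter.mp hmem).2))
    have e2 : (I.erase i).filter (fun j => ¬ ω j = c) = Tc.erase i := by
      rw [Finset.filter_erase]
    rw [e1, e2]
    congr 1
    calc ∏ j ∈ T, (Polynomial.X - Polynomial.C (ω j))
        = ∏ _j ∈ T, (Polynomial.X - Polynomial.C c) :=
          Finset.prod_congr rfl (fun j hj => by rw [hωT j hj])
      _ = _ := by rw [Finset.prod_const, ht']
  have hsplit : ∑ i ∈ I, Polynomial.C (bb i * ω i) *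
      ∏ j ∈ I.erase i, (Polynomial.X - Polynomial.C (ω j))
      = (Polynomial.X - Polynomial.C c)^t' *
          (Polynomial.C (c * ∑ i ∈ T, bb i) * r)
        + (Polynomial.X - Polynomial.C c)^(t'+1) *
          (∑ i ∈ Tc, Polynomial.C (bb i * ω i) *
            ∏ j ∈ Tc.erase i, (Polynomial.X - Polynomial.C (ω j))) := by
    rw [← Finset.sum_filter_add_sum_filter_not I (fun j => ω j = c)]
    congr 1
    · calc ∑ i ∈ T, Polynomial.C (bb i * ω i) *
            ∏ j ∈ I.erase i, (Polynomial.X - Polynomial.C (ω j))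
          = ∑ i ∈ T, Polynomial.C (bb i * c) *
            ((Polynomial.X - Polynomial.C c)^t' * r) :=
            Finset.sum_congr rfl (fun i hi => by rw [hgT i hi, hωT i hi])
        _ = _ := by
            rw [← Finset.sum_mul, ← map_sum Polynomial.C]
            rw [show (∑ i ∈ T, bb i * c) = c * ∑ i ∈ T, bb i by
              rw [← Finset.sum_mul]; ring]
            ring
    · rw [Finset.mul_sum]
      refine Finset.sum_congr rfl fun i hi => ?_
      rw [hgTc i hi]
      ring
  rw [hsplit, hG] at hE
  have hZ : (Polynomial.X - Polynomial.C c)^t' *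
      (Polynomial.C bL * ((Polynomial.X - Polynomial.C c) * r)
        - Polynomial.C (c * ∑ i ∈ T, bb i) * r
        - (Polynomial.X - Polynomial.C c) *
          ∑ i ∈ Tc, Polynomial.C (bb i * ω i) *
            ∏ j ∈ Tc.erase i, (Polynomial.X - Polynomial.C (ω j))) = 0 := by
    linear_combination hE
  have hZ0 : Polynomial.C bL * ((Polynomial.X - Polynomial.C c) * r)
        - Polynomial.C (c * ∑ i ∈ T, bb i) * r
        - (Polynomial.X - Polynomial.C c) *
          ∑ i ∈ Tc, Polynomial.C (bb i * ω i) *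
            ∏ j ∈ Tc.erase i, (Polynomial.X - Polynomial.C (ω j)) = 0 := by
    rcases mul_eq_zero.mp hZ with h | h
    · exact absurd h (pow_ne_zero _ (Polynomial.X_sub_C_ne_zero c))
    · exact h
  have hev := congrArg (Polynomial.eval c) hZ0
  simp only [Polynomial.eval_sub, Polynomial.eval_mul, Polynomial.eval_C, Polynomial.eval_X,
    Polynomial.eval_zero, sub_self, zero_mul, mul_zero, zero_sub, sub_zero] at hev
  have hrc : Polynomial.eval c r ≠ 0 := by
    rw [hr, Polynomial.eval_prod]
    refine Finset.prod_ne_zero_iff.mpr fun j hj => ?_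
    simp only [Polynomial.eval_sub, Polynomial.eval_X, Polynomial.eval_C]
    exact sub_ne_zero.mpr (fun e => (Finset.mem_filter.mp hj).2 e.symm)
  rcases mul_eq_zero.mp (neg_eq_zero.mp hev) with h | h
  · exact h
  · exact absurd h hrc

end AuxLemmas

/-- Lemma 8.2 (valuations of the roots of the canonical model): let `R` be a
discrete valuation ring with residue characteristic `p`, and `a₁, …, aₙ` positive
integers with `p ∤ aⱼ` for `j < n`, `p ∤ a₁+⋯+aₙ`, and `p` dividing no subset sum
over nonempty `S ⊆ {1, …, n-1}`. If `x₁, …, xₙ ∈ R` are pairwise distinct with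
`xₙ = 1`, `ν(xⱼ) > 0` for `j < n`, and `aᵢ ∏_{j≠i}(xⱼ-xᵢ) = (∑aⱼ) ∏_{j≠i} xⱼ`
for all `i`, then `(n-1)·ν(xⱼ) = ν(aₙ)` and `ν(xⱼ - x_k) = ν(xⱼ)` for all
distinct `j, k < n`. -/
theorem stmt15 {R : Type*} [CommRing R] [IsDomain R] [IsDiscreteValuationRing R]
    (p : ℕ) (hp : p.Prime) [CharP (ResidueField R) p]
    (n : ℕ) (hn : 0 < n)
    (a : Fin (n + 1) → ℕ) (ha : ∀ i, 0 < a i)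
    (hpa : ∀ j, j ≠ Fin.last n → ¬ p ∣ a j) (hpsum : ¬ p ∣ ∑ i, a i)
    (hreg : ∀ S : Finset (Fin (n + 1)), S.Nonempty → Fin.last n ∉ S →
      ¬ p ∣ ∑ j ∈ S, a j)
    (x : Fin (n + 1) → R) (hx : Function.Injective x) (hxn : x (Fin.last n) = 1)
    (hxm : ∀ j, j ≠ Fin.last n → x j ∈ maximalIdeal R)
    (heq : ∀ i, (a i : R) * ∏ j ∈ univ.erase i, (x j - x i) =
      ((∑ j, a j : ℕ) : R) * ∏ j ∈ univ.erase i, x j) :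
    (∀ j, j ≠ Fin.last n →
      (n : ℕ∞) * IsDiscreteValuationRing.addVal R (x j) =
        IsDiscreteValuationRing.addVal R ((a (Fin.last n) : R))) ∧
    (∀ j k, j ≠ Fin.last n → k ≠ Fin.last n → j ≠ k →
      IsDiscreteValuationRing.addVal R (x j - x k) =
        IsDiscreteValuationRing.addVal R (x j)) := by
  classical
  obtain ⟨n', rfl⟩ : ∃ m, n = m + 1 := ⟨n - 1, (Nat.succ_pred_eq_of_pos hn).symm⟩
  set L : Fin (n' + 1 + 1) := Fin.last (n' + 1) with hLdef
  have hNunit : ∀ N : ℕ, ¬ p ∣ N → IsUnit ((N : R)) := by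
    intro N hN
    rw [← residue_ne_zero_iff_isUnit]
    intro h0
    rw [map_natCast] at h0
    exact hN ((CharP.cast_eq_zero_iff (ResidueField R) p N).mp h0)
  have hAk : ((∑ i, a i : ℕ) : ResidueField R) ≠ 0 := by
    intro h0
    exact hpsum ((CharP.cast_eq_zero_iff (ResidueField R) p _).mp h0)
  have hone_sub_unit : ∀ j, j ≠ L → IsUnit (x j - x L) := by
    intro j hj
    rw [hxn]
    have h1 : IsUnit (1 - x j) :=
      isUnit_one_sub_self_of_mem_nonunits _ ((mem_maximalIdeal _).mp (hxm j hj))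
    simpa [neg_sub] using h1.neg
  have hxdne : ∀ i, (∏ j ∈ univ.erase i, (x j - x i)) ≠ 0 := by
    intro i
    rw [Finset.prod_ne_zero_iff]
    intro j hj
    exact sub_ne_zero.mpr fun e => Finset.ne_of_mem_erase hj (hx e)
  by_cases hx0 : ∀ j, x j ≠ 0
  swap
  · push_neg at hx0
    obtain ⟨j0, hj0⟩ := hx0
    have hj0L : j0 ≠ L := by
      intro e
      rw [e, hxn] at hj0
      exact one_ne_zero hj0
    by_cases hex : ∃ i, i ≠ L ∧ i ≠ j0
    · exfalso
      obtain ⟨i, hiL, hij0⟩ := hex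
      have h := heq i
      rw [Finset.prod_eq_zero (Finset.mem_erase.mpr ⟨Ne.symm hij0, Finset.mem_univ _⟩) hj0,
        mul_zero] at h
      rcases mul_eq_zero.mp h with h' | h'
      · exact (hNunit _ (hpa i hiL)).ne_zero h'
      · exact hxdne i h'
    · push_neg at hex
      have haL0 : ((a L : ℕ) : R) = 0 := by
        have h := heq L
        rw [Finset.prod_eq_zero (Finset.mem_erase.mpr ⟨hj0L, Finset.mem_univ _⟩) hj0,
          mul_zero] at h
        rcases mul_eq_zero.mp h with h' | h'
        · exact h'
        · exact absurd h' (isUnit_finset_prod _ _ fun j hj =>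
            hone_sub_unit j (Finset.mem_erase.mp hj).1).ne_zero
      constructor
      · intro j hj
        rw [hex j hj, hj0, haL0, IsDiscreteValuationRing.addVal_zero]
        exact ENat.mul_top (by exact_mod_cast Nat.succ_ne_zero n')
      · intro j k2 hj hk hjk
        exact absurd ((hex j hj).trans (hex k2 hk).symm) hjk
  · obtain ⟨ϖ, hϖ⟩ := IsDiscreteValuationRing.exists_irreducible R
    have hϖ0 : residue R ϖ = 0 := (residue_eq_zero_iff _).mpr
      ((mem_maximalIdeal ϖ).mpr (mem_nonunits_iff.mpr hϖ.not_isUnit))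
    choose val uu hxu using fun j => IsDiscreteValuationRing.eq_unit_mul_pow_irreducible (hx0 j) hϖ
    have hval1 : ∀ j, j ≠ L → 1 ≤ val j := by
      intro j hj
      by_contra h
      push_neg at h
      have hv0 : val j = 0 := Nat.lt_one_iff.mp h
      have : IsUnit (x j) := by
        rw [hxu j, hv0, pow_zero, mul_one]; exact (uu j).isUnit
      exact mem_nonunits_iff.mp ((mem_maximalIdeal _).mp (hxm j hj)) this
    set I : Finset (Fin (n' + 1 + 1)) := univ.erase L with hIdef
    have hLI : L ∉ I := Finset.notMem_erase _ _
    have hmemI : ∀ j, j ≠ L → j ∈ I := fun j hj => Finset.mem_erase.mpr ⟨hj, Finset.mem_univ _⟩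
    have hIne : I.Nonempty := ⟨0, hmemI 0 (by simp [hLdef, Fin.ext_iff])⟩
    have hIcard : I.card = n' + 1 := by
      rw [hIdef, Finset.card_erase_of_mem (Finset.mem_univ _), Finset.card_univ,
        Fintype.card_fin]
      omega
    obtain ⟨i0, hi0I, hi0⟩ := Finset.exists_mem_eq_inf' hIne val
    set m : ℕ := I.inf' hIne val with hmdef
    have hmle : ∀ j ∈ I, m ≤ val j := fun j hj => Finset.inf'_le _ hj
    have hm1 : 1 ≤ m := by
      rw [hi0]
      exact hval1 i0 (Finset.mem_erase.mp hi0I).1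
    set w : Fin (n' + 1 + 1) → R := fun j => (uu j : R) * ϖ ^ (val j - m) with hwdef
    have hxw : ∀ j ∈ I, x j = ϖ ^ m * w j := by
      intro j hj
      rw [hxu j]
      have hvj : val j = m + (val j - m) := (Nat.add_sub_cancel' (hmle j hj)).symm
      conv_lhs => rw [hvj, pow_add]
      simp only [hwdef]
      ring
    have hwu : ∀ j ∈ I, val j = m → IsUnit (w j) := by
      intro j _ hv
      simp only [hwdef, hv, Nat.sub_self, pow_zero, mul_one]
      exact (uu j).isUnit
    have hwz : ∀ j ∈ I, val j ≠ m → residue R (w j) = 0 := by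
      intro j hj hv
      have hlt : m < val j := lt_of_le_of_ne (hmle j hj) (Ne.symm hv)
      have hd : val j - m ≠ 0 := Nat.sub_ne_zero_of_lt hlt
      simp only [hwdef, map_mul, map_pow, hϖ0, zero_pow hd, mul_zero]
    -- the interpolation identity
    have key := auxKey (R := R) (n' + 1) (by rw [Fintype.card_fin]) x hx
      (fun i => ((a i : ℕ) : R)) (by
        intro t
        rw [← Nat.cast_sum]
        exact heq t)
    -- compose with q = C (ϖ^m) * X
    set q : Polynomial R := Polynomial.C (ϖ ^ m) * Polynomial.X with hq
    have keyc : ∑ i, Polynomial.C (((a i : ℕ) : R) * x i) *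
        ∏ j ∈ univ.erase i, (q - Polynomial.C (x j))
        = Polynomial.C ((-1 : R)^(n'+1) * (∑ i, ((a i : ℕ) : R)) * ∏ j, x j) := by
      have h := congrArg (fun P : Polynomial R => P.comp q) key
      simpa only [Polynomial.sum_comp, Polynomial.mul_comp, Polynomial.C_comp,
        Polynomial.prod_comp, Polynomial.sub_comp, Polynomial.X_comp] using h
    have hzX : (Polynomial.C (ϖ ^ m) : Polynomial R) ≠ 0 := by
      rw [Ne, Polynomial.C_eq_zero]
      exact pow_ne_zero _ hϖ.ne_zero
    have hterm : ∀ i ∈ I, ∏ j ∈ univ.erase i, (q - Polynomial.C (x j))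
        = (q - 1) * (Polynomial.C (ϖ^m) ^ n' *
            ∏ j ∈ I.erase i, (Polynomial.X - Polynomial.C (w j))) := by
      intro i hi
      have hiL : i ≠ L := (Finset.mem_erase.mp hi).1
      have hLmem : L ∈ univ.erase i := Finset.mem_erase.mpr ⟨Ne.symm hiL, Finset.mem_univ _⟩
      rw [← Finset.mul_prod_erase _ _ hLmem]
      rw [show (univ.erase i).erase L = I.erase i from by rw [hIdef, Finset.erase_right_comm]]
      rw [hxn, map_one]
      congr 1
      calc ∏ j ∈ I.erase i, (q - Polynomial.C (x j))
          = ∏ j ∈ I.erase i, (Polynomial.C (ϖ^m) * (Polynomial.X - Polynomial.C (w j))) := by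
            refine Finset.prod_congr rfl fun j hj => ?_
            rw [hxw j (Finset.mem_of_mem_erase hj), map_mul, hq]
            ring
        _ = _ := by
            rw [Finset.prod_mul_distrib, Finset.prod_const,
              Finset.card_erase_of_mem hi, hIcard, Nat.add_sub_cancel]
    have htermL : ∏ j ∈ univ.erase L, (q - Polynomial.C (x j))
        = Polynomial.C (ϖ^m) ^ (n'+1) * ∏ j ∈ I, (Polynomial.X - Polynomial.C (w j)) := by
      rw [← hIdef]
      calc ∏ j ∈ I, (q - Polynomial.C (x j))
          = ∏ j ∈ I, (Polynomial.C (ϖ^m) * (Polynomial.X - Polynomial.C (w j))) := by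
            refine Finset.prod_congr rfl fun j hj => ?_
            rw [hxw j hj, map_mul, hq]; ring
        _ = _ := by rw [Finset.prod_mul_distrib, Finset.prod_const, hIcard]
    have hprodx : (∏ j, x j) = ϖ^(m*(n'+1)) * ∏ j ∈ I, w j := by
      rw [← Finset.mul_prod_erase univ x (Finset.mem_univ L), hxn, one_mul, ← hIdef]
      calc ∏ j ∈ I, x j = ∏ j ∈ I, (ϖ^m * w j) := Finset.prod_congr rfl hxw
        _ = (ϖ^m)^(n'+1) * ∏ j ∈ I, w j := by
            rw [Finset.prod_mul_distrib, Finset.prod_const, hIcard]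
        _ = _ := by rw [← pow_mul]
    have hsum : ∑ i, Polynomial.C (((a i : ℕ) : R) * x i) *
        ∏ j ∈ univ.erase i, (q - Polynomial.C (x j))
        = Polynomial.C (ϖ^m) ^ (n'+1) *
          ((∑ i ∈ I, Polynomial.C (((a i : ℕ) : R) * w i) *
            ((q - 1) * ∏ j ∈ I.erase i, (Polynomial.X - Polynomial.C (w j))))
            + Polynomial.C ((a L : ℕ) : R) *
              ∏ j ∈ I, (Polynomial.X - Polynomial.C (w j))) := by
      rw [← Finset.sum_erase_add univ _ (Finset.mem_univ L), ← hIdef]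
      rw [mul_add, Finset.mul_sum]
      refine congrArg₂ (· + ·) ?_ ?_
      · refine Finset.sum_congr rfl fun i hi => ?_
        rw [hterm i hi, hxw i hi]
        rw [show ((a i : ℕ) : R) * (ϖ^m * w i) = ϖ^m * (((a i : ℕ) : R) * w i) from by ring,
          map_mul]
        ring
      · rw [htermL, hxn, mul_one]
        ring
    have E1 : (∑ i ∈ I, Polynomial.C (((a i : ℕ) : R) * w i) *
          ((q - 1) * ∏ j ∈ I.erase i, (Polynomial.X - Polynomial.C (w j))))
        + Polynomial.C ((a L : ℕ) : R) * ∏ j ∈ I, (Polynomial.X - Polynomial.C (w j))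
        = Polynomial.C ((-1 : R)^(n'+1) * (∑ i, ((a i : ℕ) : R)) * ∏ j ∈ I, w j) := by
      have hCr : Polynomial.C ((-1 : R)^(n'+1) * (∑ i, ((a i : ℕ) : R)) * ∏ j, x j)
          = Polynomial.C (ϖ^m) ^ (n'+1) *
            Polynomial.C ((-1 : R)^(n'+1) * (∑ i, ((a i : ℕ) : R)) * ∏ j ∈ I, w j) := by
        rw [hprodx, ← Polynomial.C_pow, ← map_mul]
        congr 1
        rw [← pow_mul]
        ring
      apply mul_left_cancel₀ (pow_ne_zero (n'+1) hzX)
      rw [← hsum, keyc, hCr]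
    -- reduce mod the maximal ideal
    have hφq : Polynomial.map (residue R) q = 0 := by
      rw [hq, Polynomial.map_mul, Polynomial.map_C, Polynomial.map_X, map_pow, hϖ0,
        zero_pow (by omega : m ≠ 0), Polynomial.C_0, zero_mul]
    have E2 : Polynomial.C (((a L : ℕ)) : ResidueField R) *
          ∏ j ∈ I, (Polynomial.X - Polynomial.C (residue R (w j)))
        = (∑ i ∈ I, Polynomial.C (((a i : ℕ) : ResidueField R) * residue R (w i)) *
            ∏ j ∈ I.erase i, (Polynomial.X - Polynomial.C (residue R (w j))))
          + Polynomial.C ((-1 : ResidueField R)^(n'+1) *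
              (∑ i, ((a i : ℕ) : ResidueField R)) * ∏ j ∈ I, residue R (w j)) := by
      have h := congrArg (Polynomial.map (residue R)) E1
      simp only [Polynomial.map_add, Polynomial.map_mul, Polynomial.map_sub, Polynomial.map_one,
        Polynomial.map_C, Polynomial.map_X, Polynomial.map_sum, Polynomial.map_prod,
        Polynomial.map_pow, Polynomial.map_natCast, Polynomial.map_neg, hφq,
        map_mul, map_natCast, map_pow, map_sum, map_prod, map_neg, map_one] at h
      simp only [map_mul, map_natCast, map_pow, map_neg, map_one, map_sum, map_prod,
        zero_sub, neg_mul, mul_neg, neg_neg, Finset.sum_neg_distrib, one_mul, mul_one] at h ⊢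
      linear_combination h
    have hc0 : residue R (w i0) ≠ 0 :=
      (residue_ne_zero_iff_isUnit _).mpr (hwu i0 hi0I hi0.symm)
    have hallm : ∀ j ∈ I, val j = m := by
      intro j hj
      by_contra hv
      have hW0 : (∏ j2 ∈ I, residue R (w j2)) = 0 := Finset.prod_eq_zero hj (hwz j hj hv)
      have hTne : (I.filter fun j2 => residue R (w j2) = residue R (w i0)).Nonempty :=
        ⟨i0, Finset.mem_filter.mpr ⟨hi0I, rfl⟩⟩
      have hEA : Polynomial.C (((a L : ℕ)) : ResidueField R) *
            ∏ j2 ∈ I, (Polynomial.X - Polynomial.C (residue R (w j2)))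
          = ∑ i ∈ I, Polynomial.C (((a i : ℕ) : ResidueField R) * residue R (w i)) *
              ∏ j2 ∈ I.erase i, (Polynomial.X - Polynomial.C (residue R (w j2))) := by
        rw [E2, hW0, mul_zero, Polynomial.C_0, add_zero]
      have hres := auxA I (fun j2 => residue R (w j2))
        (fun i => ((a i : ℕ) : ResidueField R)) _ _ hTne hEA
      rcases mul_eq_zero.mp hres with h | h
      · exact hc0 h
      · have hcast : ((∑ i ∈ I.filter (fun j2 => residue R (w j2) = residue R (w i0)), a i : ℕ)
            : ResidueField R) = 0 := by
          push_cast
          exact h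
        exact hreg _ hTne (fun hmem => hLI (Finset.mem_of_mem_filter _ hmem))
          ((CharP.cast_eq_zero_iff _ p _).mp hcast)
    have hωu : ∀ j ∈ I, residue R (w j) ≠ 0 := fun j hj =>
      (residue_ne_zero_iff_isUnit _).mpr (hwu j hj (hallm j hj))
    have hWne : (∏ j ∈ I, residue R (w j)) ≠ 0 := Finset.prod_ne_zero_iff.mpr hωu
    have hcstne : ((-1 : ResidueField R)^(n'+1) * (∑ i, ((a i : ℕ) : ResidueField R)) *
        ∏ j ∈ I, residue R (w j)) ≠ 0 := by
      refine mul_ne_zero (mul_ne_zero ?_ ?_) hWne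
      · exact pow_ne_zero _ (neg_ne_zero.mpr one_ne_zero)
      · rw [← Nat.cast_sum]
        exact hAk
    have hdist : ∀ j ∈ I, ∀ k2 ∈ I, j ≠ k2 → residue R (w j) ≠ residue R (w k2) := by
      intro j hj k2 hk2 hjk e
      apply hcstne
      refine auxB I (fun j2 => residue R (w j2)) (fun i => ((a i : ℕ) : ResidueField R))
        _ _ (residue R (w j)) ?_ E2
      have hsub : ({j, k2} : Finset (Fin (n' + 1 + 1))) ⊆
          I.filter (fun j2 => residue R (w j2) = residue R (w j)) := by
        intro z hz
        rcases Finset.mem_insert.mp hz with rfl | hz2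
        · exact Finset.mem_filter.mpr ⟨hj, rfl⟩
        · rw [Finset.mem_singleton.mp hz2]
          exact Finset.mem_filter.mpr ⟨hk2, e.symm⟩
      calc 1 < ({j, k2} : Finset (Fin (n' + 1 + 1))).card :=
            lt_of_lt_of_eq one_lt_two (Finset.card_pair hjk).symm
        _ ≤ _ := Finset.card_le_card hsub
    have hvalx : ∀ j ∈ I, IsDiscreteValuationRing.addVal R (x j) = (m : ℕ∞) := by
      intro j hj
      exact IsDiscreteValuationRing.addVal_def (x j) (uu j) hϖ m (by rw [hxu j, hallm j hj])
    have haLval : IsDiscreteValuationRing.addVal R ((a L : ℕ) : R)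
        = ((m * (n'+1) : ℕ) : ℕ∞) := by
      have h := heq L
      have hVu : IsUnit (∏ j ∈ univ.erase L, (x j - x L)) :=
        isUnit_finset_prod _ _ fun j hj => hone_sub_unit j (Finset.mem_erase.mp hj).1
      obtain ⟨V, hV⟩ := hVu
      have hP : ∏ j ∈ univ.erase L, x j = (↑(∏ j ∈ I, uu j) : R) * ϖ^(m*(n'+1)) := by
        rw [← hIdef]
        calc ∏ j ∈ I, x j = ∏ j ∈ I, ((uu j : R) * ϖ^m) := by
              refine Finset.prod_congr rfl fun j hj => ?_
              rw [hxu j, hallm j hj]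
          _ = (↑(∏ j ∈ I, uu j) : R) * (ϖ^m)^(n'+1) := by
              rw [Finset.prod_mul_distrib, Finset.prod_const, hIcard]
              congr 1
              rw [← Units.coeHom_apply, map_prod]
              rfl
          _ = _ := by rw [← pow_mul]
      have hAu : IsUnit (((∑ j, a j : ℕ) : R)) := hNunit _ hpsum
      rw [← hV, hP, ← hAu.unit_spec] at h
      refine IsDiscreteValuationRing.addVal_def _ (hAu.unit * (∏ j ∈ I, uu j) * V⁻¹) hϖ _ ?_
      have hVinv : (V : R) * ↑(V⁻¹) = 1 := V.mul_inv
      calc ((a L : ℕ) : R) = (((a L : ℕ) : R) * ↑V) * ↑V⁻¹ := by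
            rw [mul_assoc, hVinv, mul_one]
        _ = ((hAu.unit : R) * (↑(∏ j ∈ I, uu j) * ϖ^(m*(n'+1)))) * ↑V⁻¹ := by rw [h]
        _ = _ := by
            push_cast [Units.val_mul]
            ring
    refine ⟨?_, ?_⟩
    · intro j hj
      rw [hvalx j (hmemI j hj), haLval]
      push_cast
      ring
    · intro j k2 hjL hkL hjk
      have hjI := hmemI j hjL
      have hkI := hmemI k2 hkL
      have hwu2 : IsUnit (w j - w k2) := by
        have hres : residue R (w j - w k2) ≠ 0 := by
          rw [map_sub]
          exact sub_ne_zero.mpr (hdist j hjI k2 hkI hjk)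
        exact (residue_ne_zero_iff_isUnit _).mp hres
      obtain ⟨e, he⟩ := hwu2
      rw [hvalx j hjI]
      refine IsDiscreteValuationRing.addVal_def (x j - x k2) e hϖ m ?_
      rw [hxw j hjI, hxw k2 hkI, he]
      ring
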